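/- Let E be a finite-dimensional real inner product space, let f : E → ℝ be differentiable with f(x) ≥ 0 for all x, and suppose ∇f is Lipschitz with constant L > 0. Fix a step size η with 0 < η ≤ 1/L and a constant c > 0, and define gradient-descent iterates by x_{t+1} = x_t − η·∇f(x_t). If ‖∇f(x_t)‖² ≥ c·f(x_t)² for every t ≥ 0, and f(x_0) ≤ 2/(η c), then for every t ≥ 0, f(x_t) ≤ 2/(η·c·(t+1)). -/

import Mathlib

open InnerProductSpace Set

/-- Descent lemma / smooth upper bound. -/
lemma smooth_upper_bound {E : Type*} [NormedAddCommGroup E] [InnerProductSpace ℝ E]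
    [CompleteSpace E] (f : E → ℝ) (hf : Differentiable ℝ f) (L : ℝ) (hL : 0 < L)
    (hlip : LipschitzWith L.toNNReal (gradient f)) (x v : E) :
    f (x + v) ≤ f x + inner ℝ (gradient f x) v + L / 2 * ‖v‖ ^ 2 := by
  set φ : ℝ → ℝ := fun t => f (x + t • v) - t * inner ℝ (gradient f x) v - L / 2 * t ^ 2 * ‖v‖ ^ 2
    with hφ
  have hder : ∀ t : ℝ, HasDerivAt φ
      ((inner ℝ (gradient f (x + t • v)) v : ℝ) - inner ℝ (gradient f x) v - L * t * ‖v‖ ^ 2) t := by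
    intro t
    have h1 : HasDerivAt (fun t : ℝ => x + t • v) v t := by
      simpa using ((hasDerivAt_id t).smul_const v).const_add x
    have h2 : HasDerivAt (fun t : ℝ => f (x + t • v))
        ((inner ℝ (gradient f (x + t • v)) v : ℝ)) t := by
      have := ((hf (x + t • v)).hasGradientAt.hasFDerivAt).comp_hasDerivAt t h1
      simpa [Function.comp_def] using this
    have h3 : HasDerivAt (fun t : ℝ => t * (inner ℝ (gradient f x) v : ℝ))
        (inner ℝ (gradient f x) v : ℝ) t := by
      simpa using (hasDerivAt_id t).mul_const (inner ℝ (gradient f x) v : ℝ)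
    have h4 : HasDerivAt (fun t : ℝ => L / 2 * t ^ 2 * ‖v‖ ^ 2) (L * t * ‖v‖ ^ 2) t := by
      have : HasDerivAt (fun t : ℝ => t ^ 2) (2 * t) t := by
        simpa using hasDerivAt_pow 2 t
      have := (this.const_mul (L / 2)).mul_const (‖v‖ ^ 2)
      exact this.congr_deriv (by ring)
    exact (h2.sub h3).sub h4
  have hkey : φ 1 ≤ φ 0 := by
    have hanti : AntitoneOn φ (Icc (0:ℝ) 1) := by
      apply antitoneOn_of_deriv_nonpos (convex_Icc 0 1)
      · exact fun t _ => ((hder t).continuousAt).continuousWithinAt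
      · exact fun t _ => ((hder t).differentiableAt).differentiableWithinAt
      · intro t ht
        rw [interior_Icc] at ht
        rw [(hder t).deriv]
        have hb : (inner ℝ (gradient f (x + t • v) - gradient f x) v : ℝ)
            ≤ L * t * ‖v‖ ^ 2 := by
          calc (inner ℝ (gradient f (x + t • v) - gradient f x) v : ℝ)
              ≤ ‖gradient f (x + t • v) - gradient f x‖ * ‖v‖ :=
                real_inner_le_norm _ _
            _ ≤ L * ‖t • v‖ * ‖v‖ := by
                apply mul_le_mul_of_nonneg_right _ (norm_nonneg v)
                have := hlip.dist_le_mul (x + t • v) x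
                simp only [dist_eq_norm] at this
                simpa [Real.coe_toNNReal _ hL.le] using this
            _ = L * t * ‖v‖ ^ 2 := by
                rw [norm_smul, Real.norm_eq_abs, abs_of_pos ht.1]; ring
        have := inner_sub_left (𝕜 := ℝ) (gradient f (x + t • v)) (gradient f x) v
        simp only [this] at hb
        linarith
    simpa using hanti (left_mem_Icc.2 zero_le_one) (right_mem_Icc.2 zero_le_one) zero_le_one
  simp only [hφ, one_smul, one_mul, one_pow, zero_smul, add_zero, zero_mul, mul_zero,
    ne_eq, OfNat.ofNat_ne_zero, not_false_eq_true, zero_pow, sub_zero] at hkey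
  linarith


/-- Sublinear convergence of gradient descent: if the function is nonnegative, `L`-smooth,
and satisfies the gradient lower bound `‖∇f(x_t)‖² ≥ c·f(x_t)²` along the iterates, then
the values decay at rate `O(1/(η t))`. -/
theorem gd_sublinear_convergence {E : Type*} [NormedAddCommGroup E] [InnerProductSpace ℝ E]
    [FiniteDimensional ℝ E] (f : E → ℝ) (hf : Differentiable ℝ f)
    (hfpos : ∀ x, 0 ≤ f x) (L : ℝ) (hL : 0 < L)
    (hlip : LipschitzWith L.toNNReal (gradient f))
    (η : ℝ) (hη : 0 < η) (hηL : η ≤ 1 / L) (c : ℝ) (hc : 0 < c)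
    (x : ℕ → E) (hx : ∀ t, x (t + 1) = x t - η • gradient f (x t))
    (hgrad : ∀ t, ‖gradient f (x t)‖ ^ 2 ≥ c * (f (x t)) ^ 2)
    (h0 : f (x 0) ≤ 2 / (η * c)) :
    ∀ t : ℕ, f (x t) ≤ 2 / (η * c * (t + 1)) := by
  have hLη : L * η ≤ 1 := by
    rw [le_div_iff₀ hL] at hηL; linarith
  -- one-step decrease
  have key : ∀ t : ℕ, f (x (t + 1)) ≤ f (x t) - η * c / 2 * f (x t) ^ 2 := by
    intro t
    set g := gradient f (x t) with hg
    have hstep : x (t + 1) = x t + (-η) • g := by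
      rw [hx t]; module
    have hub := smooth_upper_bound f hf L hL hlip (x t) ((-η) • g)
    rw [← hstep] at hub
    have hin : (inner ℝ g ((-η) • g) : ℝ) = -η * ‖g‖ ^ 2 := by
      rw [real_inner_smul_right, real_inner_self_eq_norm_sq]
    have hnrm : ‖(-η) • g‖ ^ 2 = η ^ 2 * ‖g‖ ^ 2 := by
      rw [norm_smul, mul_pow, Real.norm_eq_abs, sq_abs]; ring
    rw [hin, hnrm] at hub
    have h2 : f (x (t + 1)) ≤ f (x t) - η / 2 * ‖g‖ ^ 2 := by
      have hgn : 0 ≤ ‖g‖ ^ 2 := sq_nonneg _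
      nlinarith [mul_nonneg (mul_nonneg hη.le hgn) (sub_nonneg.2 hLη)]
    have := hgrad t
    nlinarith
  intro t
  induction t with
  | zero => simpa using h0
  | succ t ih =>
      have ha' := key t
      have hpos := hfpos (x t)
      have hpos' := hfpos (x (t + 1))
      set a := f (x t) with hadef
      set K := η * c / 2 with hK
      have hKpos : 0 < K := by rw [hK]; positivity
      set s : ℝ := (t : ℝ) + 1 with hsdef
      clear_value a K s
      have hs : (0:ℝ) < s := by rw [hsdef]; positivity
      have hs1 : (1:ℝ) ≤ s := by rw [hsdef]; exact le_add_of_nonneg_left (Nat.cast_nonneg t)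
      have ha : a * (η * c * s) ≤ 2 := by
        rw [← le_div_iff₀ (by positivity)]; exact ih
      have hv : s * K * a ≤ 1 := by
        have he : s * K * a = a * (η * c * s) / 2 := by rw [hK]; ring
        linarith
      have hvn : 0 ≤ s * K * a := mul_nonneg (mul_nonneg hs.le hKpos.le) hpos
      have h1 := sq_nonneg (s * (1 - s * K * a))
      have h2 : 0 ≤ s * (s - 1) * (s * K * a) * (1 - s * K * a) := by
        apply mul_nonneg (mul_nonneg (mul_nonneg hs.le (by linarith)) hvn); linarith
      have h3 := sq_nonneg (s * K * a)
      have hKs : 0 ≤ K * (s + 1) := mul_nonneg hKpos.le (by linarith)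
      have step1 : K * (s + 1) * f (x (t + 1)) ≤ K * (s + 1) * (a - K * a ^ 2) :=
        mul_le_mul_of_nonneg_left ha' hKs
      have step2 : s ^ 2 * (K * (s + 1) * (a - K * a ^ 2)) ≤ s ^ 2 * 1 := by linarith [h1, h2, h3]
      have step3 : s ^ 2 * (K * (s + 1) * f (x (t + 1))) ≤ s ^ 2 * 1 :=
        le_trans (mul_le_mul_of_nonneg_left step1 (sq_nonneg s)) step2
      have step4 : K * (s + 1) * f (x (t + 1)) ≤ 1 :=
        le_of_mul_le_mul_left step3 (pow_pos hs 2)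
      have hconv : η * c * (((t:ℕ) + 1 : ℕ) + 1 : ℝ) = 2 * (K * (s + 1)) := by
        push_cast [hK, hsdef]; ring
      rw [le_div_iff₀ (by rw [hconv]; exact mul_pos two_pos (mul_pos hKpos (by linarith))), hconv]
      linarith
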